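/- Let K be a nonempty collection of cumulative distribution functions on ℝ, all of which are bounded above pointwise by the CDF F̄(y) = 1{y ≥ b} for some real b. Define S(K)(y) := sup{F(y) : F ∈ K} and F_K(y) := lim_{ỹ ↓ y} S(K)(ỹ). Then F_K is itself a cumulative distribution function: it is non-decreasing, right-continuous, tends to 0 at −∞ and to 1 at +∞. -/

import Mathlib

open Filter Topology

/-- A cumulative distribution function on ℝ. -/
def IsCDF (F : ℝ → ℝ) : Prop :=
  Monotone F ∧ (∀ y, ContinuousWithinAt F (Set.Ici y) y) ∧
  Tendsto F atBot (𝓝 0) ∧ Tendsto F atTop (𝓝 1) ∧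
  ∀ y, F y ∈ Set.Icc (0 : ℝ) 1

/-- The right-continuous regularization of the pointwise supremum of a
nonempty family of CDFs, all bounded above by the CDF of the point mass at `b`,
is itself a CDF. (Monotone Envelope Lemma, part 1.) -/
theorem monotone_envelope_is_cdf
    (K : Set (ℝ → ℝ)) (hne : K.Nonempty) (b : ℝ)
    (hcdf : ∀ F ∈ K, IsCDF F)
    (hbd : ∀ F ∈ K, ∀ y : ℝ, F y ≤ if b ≤ y then 1 else 0) :
    IsCDF (fun y =>
      sInf ((fun t => sSup ((fun F => F t) '' K)) '' Set.Ioi y)) := by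
  obtain ⟨F0, hF0⟩ := hne
  set S : ℝ → ℝ := fun t => sSup ((fun F => F t) '' K) with hSdef
  have hIm : ∀ t : ℝ, ((fun F => F t) '' K).Nonempty := fun t => ⟨F0 t, ⟨F0, hF0, rfl⟩⟩
  have hbdd : ∀ t : ℝ, BddAbove ((fun F => F t) '' K) := by
    intro t
    refine ⟨1, ?_⟩
    rintro x ⟨F, hF, rfl⟩
    exact (hbd F hF t).trans (by split <;> norm_num)
  have hS_le1 : ∀ t, S t ≤ 1 := fun t =>
    csSup_le (hIm t) (by rintro x ⟨F, hF, rfl⟩; exact (hbd F hF t).trans (by split <;> norm_num))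
  have hS_nonneg : ∀ t, 0 ≤ S t := fun t =>
    le_trans ((hcdf F0 hF0).2.2.2.2 t).1 (le_csSup (hbdd t) ⟨F0, hF0, rfl⟩)
  have hS_mono : Monotone S := by
    intro t t' htt'
    apply csSup_le (hIm t)
    rintro x ⟨F, hF, rfl⟩
    exact ((hcdf F hF).1 htt').trans (le_csSup (hbdd t') ⟨F, hF, rfl⟩)
  have hS_zero : ∀ t, t < b → S t = 0 := by
    intro t ht
    refine le_antisymm ?_ (hS_nonneg t)
    apply csSup_le (hIm t)
    rintro x ⟨F, hF, rfl⟩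
    have := hbd F hF t
    rwa [if_neg (not_le.2 ht)] at this
  set G : ℝ → ℝ := fun y => sInf (S '' Set.Ioi y) with hGdef
  have hGIm : ∀ y : ℝ, (S '' Set.Ioi y).Nonempty := fun y =>
    ⟨S (y + 1), ⟨y + 1, by simp, rfl⟩⟩
  have hGbdd : ∀ y : ℝ, BddBelow (S '' Set.Ioi y) := fun y =>
    ⟨0, by rintro x ⟨t, ht, rfl⟩; exact hS_nonneg t⟩
  have hG_ge : ∀ y, S y ≤ G y := fun y =>
    le_csInf (hGIm y) (by rintro x ⟨t, ht, rfl⟩; exact hS_mono (le_of_lt ht))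
  have hG_le : ∀ y t, y < t → G y ≤ S t := fun y t ht => csInf_le (hGbdd y) ⟨t, ht, rfl⟩
  have hG_mono : Monotone G := by
    intro y y' h
    exact le_csInf (hGIm y') (by rintro x ⟨t, ht, rfl⟩; exact hG_le y t (lt_of_le_of_lt h ht))
  have hG_mem : ∀ y, G y ∈ Set.Icc (0 : ℝ) 1 := fun y =>
    ⟨le_trans (hS_nonneg y) (hG_ge y), (hG_le y (y + 1) (by linarith)).trans (hS_le1 _)⟩
  refine ⟨hG_mono, ?_, ?_, ?_, hG_mem⟩
  · intro y
    rw [ContinuousWithinAt]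
    apply tendsto_order.2
    constructor
    · intro a ha
      filter_upwards [self_mem_nhdsWithin] with z hz
      exact lt_of_lt_of_le ha (hG_mono hz)
    · intro a ha
      obtain ⟨x, ⟨t, ht, rfl⟩, hx⟩ := exists_lt_of_csInf_lt (hGIm y) ha
      filter_upwards [Ico_mem_nhdsGE_of_mem ⟨le_refl y, ht⟩] with z hz
      exact lt_of_le_of_lt (hG_le z t hz.2) hx
  · have hev : ∀ᶠ y in atBot, G y = 0 := by
      filter_upwards [eventually_lt_atBot b] with y hy
      obtain ⟨t, hyt, htb⟩ := exists_between hy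
      exact le_antisymm ((hG_le y t hyt).trans_eq (hS_zero t htb)) (hG_mem y).1
    exact Tendsto.congr' (EventuallyEq.symm hev) tendsto_const_nhds
  · have hF0top := (hcdf F0 hF0).2.2.2.1
    refine tendsto_of_tendsto_of_tendsto_of_le_of_le hF0top tendsto_const_nhds ?_ ?_
    · intro y; exact le_trans (le_csSup (hbdd y) ⟨F0, hF0, rfl⟩) (hG_ge y)
    · intro y; exact (hG_mem y).2
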